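/- Let p be a prime and H, H' finite graphs with no automorphisms of order p. If hom(G,H) ≡ hom(G,H') (mod p) for all graphs G, then inj(G,H) ≡ inj(G,H') (mod p) for all graphs G, where inj counts injective homomorphisms. -/

import Mathlib

structure SGraph (V : Type) where
  Adj : V → V → Prop
  symm : ∀ u v, Adj u v → Adj v u

def SGraph.IsHom {V W : Type} (G : SGraph V) (H : SGraph W) (f : V → W) : Prop :=
  ∀ u v, G.Adj u v → H.Adj (f u) (f v)

noncomputable def homCount {V W : Type} (G : SGraph V) (H : SGraph W) : ℕ :=
  Nat.card {f : V → W // G.IsHom H f}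

def SGraph.IsAut {V : Type} (H : SGraph V) (σ : Equiv.Perm V) : Prop :=
  ∀ u v, H.Adj u v ↔ H.Adj (σ u) (σ v)

def SGraph.fixedSubgraph {V : Type} (H : SGraph V) (σ : Equiv.Perm V) :
    SGraph {v : V // σ v = v} :=
  ⟨fun u v => H.Adj u v, fun u v h => H.symm u v h⟩
noncomputable def injCount {V W : Type} (G : SGraph V) (H : SGraph W) : ℕ :=
  Nat.card {f : V → W // G.IsHom H f ∧ Function.Injective f}

def quotG {U : Type} (G : SGraph U) (s : Setoid U) : SGraph (Quotient s) where
  Adj x y := ∃ u v, Quotient.mk s u = x ∧ Quotient.mk s v = y ∧ G.Adj u v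
  symm := by rintro x y ⟨u, v, hu, hv, h⟩; exact ⟨v, u, hv, hu, G.symm u v h⟩

instance setoidFinite {U : Type} [Finite U] : Finite (Setoid U) :=
  Finite.of_injective (fun s => (⇑s : U → U → Prop))
    (fun s t h => Setoid.ext fun a b => iff_of_eq (congrFun (congrFun h a) b))

lemma injCount_congr {U U' W : Type} (e : U ≃ U') (G : SGraph U) (G' : SGraph U')
    (hadj : ∀ a b, G.Adj a b ↔ G'.Adj (e a) (e b)) (H : SGraph W) :
    injCount G H = injCount G' H := by
  apply Nat.card_congr
  refine ⟨fun f => ⟨f.1 ∘ e.symm, fun u v h => ?_, f.2.2.comp e.symm.injective⟩,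
    fun g => ⟨g.1 ∘ e, fun u v h => g.2.1 _ _ ((hadj u v).mp h), g.2.2.comp e.injective⟩,
    fun f => Subtype.ext (by funext x; simp), fun g => Subtype.ext (by funext x; simp)⟩
  exact f.2.1 _ _ ((hadj (e.symm u) (e.symm v)).mpr (by simpa using h))

lemma nat_card_sigma {ι : Type} [Fintype ι] (A : ι → Type) [∀ i, Finite (A i)] :
    Nat.card (Σ i, A i) = ∑ i, Nat.card (A i) := by
  letI : ∀ i, Fintype (A i) := fun i => Fintype.ofFinite _
  simp [Nat.card_eq_fintype_card, Fintype.card_sigma]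

lemma heq_aux {U W : Type} {P : (s : Setoid U) → (Quotient s → W) → Prop}
    {s t : Setoid U} (h : s = t)
    (a : {g : Quotient s → W // P s g}) (b : {g : Quotient t → W // P t g})
    (hab : ∀ x : U, a.1 (Quotient.mk s x) = b.1 (Quotient.mk t x)) : HEq a b := by
  subst h
  exact heq_of_eq (Subtype.ext (funext fun q => by
    induction q using Quotient.ind; exact hab _))

lemma hom_eq_sum {U W : Type} [Fintype U] [Finite W] (G : SGraph U) (H : SGraph W) :
    letI : Fintype (Setoid U) := Fintype.ofFinite _
    homCount G H = ∑ s : Setoid U, injCount (quotG G s) H := by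
  letI : Fintype (Setoid U) := Fintype.ofFinite _
  have key : {f : U → W // G.IsHom H f} ≃
      Σ s : Setoid U, {g : Quotient s → W //
        (quotG G s).IsHom H g ∧ Function.Injective g} := by
    refine ⟨fun f => ⟨Setoid.ker f.1, Quotient.lift f.1 (fun a b h => h), ?_, ?_⟩,
      fun x => ⟨x.2.1 ∘ Quotient.mk x.1, fun u v h =>
        x.2.2.1 _ _ ⟨u, v, rfl, rfl, h⟩⟩, ?_, ?_⟩
    · rintro x y ⟨u, v, rfl, rfl, h⟩
      exact f.2 u v h
    · rintro ⟨x⟩ ⟨y⟩ h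
      exact Quotient.sound h
    · rintro ⟨f, hf⟩
      exact Subtype.ext rfl
    · rintro ⟨s, g, hg, hginj⟩
      have hker : Setoid.ker (g ∘ Quotient.mk s) = s := by
        ext a b
        constructor
        · intro h
          exact Quotient.exact (hginj h)
        · intro h
          show g _ = g _
          rw [Quotient.sound h]
      exact Sigma.ext hker (heq_aux
        (P := fun s g => (quotG G s).IsHom H g ∧ Function.Injective g)
        hker _ _ (fun x => rfl))
  rw [homCount, Nat.card_congr key, nat_card_sigma]
  rfl

lemma injCount_bot {U W : Type} (G : SGraph U) (H : SGraph W) :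
    injCount (quotG G (⊥ : Setoid U)) H = injCount G H := by
  have hbot : ∀ a b : U, (⊥ : Setoid U) a b → a = b := fun a b h => by
    rwa [Setoid.bot_def] at h
  refine (injCount_congr ⟨Quotient.mk ⊥, Quotient.lift id hbot,
    fun a => rfl, fun q => ?_⟩ G (quotG G ⊥) ?_ H).symm
  · induction q using Quotient.ind; rfl
  · intro a b
    constructor
    · intro h; exact ⟨a, b, rfl, rfl, h⟩
    · rintro ⟨u, v, hu, hv, h⟩
      rw [hbot u a (Quotient.exact hu), hbot v b (Quotient.exact hv)] at h
      exact h

lemma card_quot_lt {U : Type} [Fintype U] {s : Setoid U} (hs : s ≠ ⊥) :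
    letI : Fintype (Quotient s) := Fintype.ofFinite _
    Fintype.card (Quotient s) < Fintype.card U := by
  letI : Fintype (Quotient s) := Fintype.ofFinite _
  have hex : ∃ a b : U, a ≠ b ∧ s a b := by
    by_contra hc
    push_neg at hc
    refine hs (le_antisymm (Setoid.le_def.mpr fun {a b} h => ?_) bot_le)
    show (⊥ : Setoid U) a b
    rw [Setoid.bot_def]
    by_contra hne
    exact hc a b hne h
  obtain ⟨a, b, hne, hrel⟩ := hex
  exact Fintype.card_lt_of_surjective_not_injective (Quotient.mk s)
    Quotient.mk_surjective (fun hinj => hne (hinj (Quotient.sound hrel)))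

/-- If H, H' have no automorphisms of order p and hom(G,H) ≡ hom(G,H') mod p for
all G, then inj(G,H) ≡ inj(G,H') mod p for all G. -/
theorem stmt4 (p : ℕ) (hp : p.Prime) {V W : Type} [Fintype V] [Fintype W]
    (H : SGraph V) (H' : SGraph W)
    (hH : ¬∃ σ : Equiv.Perm V, H.IsAut σ ∧ orderOf σ = p)
    (hH' : ¬∃ σ : Equiv.Perm W, H'.IsAut σ ∧ orderOf σ = p)
    (hhom : ∀ (U : Type) [Fintype U] (G : SGraph U),
      homCount G H ≡ homCount G H' [MOD p]) :
    ∀ (U : Type) [Fintype U] (G : SGraph U),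
      injCount G H ≡ injCount G H' [MOD p] := by
  suffices h : ∀ (n : ℕ) (U : Type) [Fintype U] (G : SGraph U), Fintype.card U ≤ n →
      ((injCount G H : ZMod p) = (injCount G H' : ZMod p)) by
    intro U _ G
    exact (ZMod.natCast_eq_natCast_iff _ _ _).mp (h (Fintype.card U) U G le_rfl)
  intro n
  induction n using Nat.strong_induction_on with
  | _ n ih =>
    intro U _ G hcard
    letI : Fintype (Setoid U) := Fintype.ofFinite _
    letI : DecidableEq (Setoid U) := Classical.decEq _
    have hsplit : ∀ (W' : Type) [Fintype W'] (K : SGraph W'),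
        (injCount G K : ZMod p) = (homCount G K : ZMod p) -
          ∑ s ∈ Finset.univ.erase (⊥ : Setoid U), (injCount (quotG G s) K : ZMod p) := by
      intro W' _ K
      have h1 := hom_eq_sum G K
      have h2 : ((homCount G K : ℕ) : ZMod p) = ∑ s : Setoid U, (injCount (quotG G s) K : ZMod p) := by
        rw [h1]; push_cast; rfl
      rw [← Finset.add_sum_erase _ _ (Finset.mem_univ (⊥ : Setoid U))] at h2
      rw [injCount_bot G K] at h2
      linear_combination -h2
    rw [hsplit V H, hsplit W H']
    have hh : ((homCount G H : ℕ) : ZMod p) = ((homCount G H' : ℕ) : ZMod p) :=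
      (ZMod.natCast_eq_natCast_iff _ _ _).mpr (hhom U G)
    rw [hh]
    congr 1
    refine Finset.sum_congr rfl (fun s hs => ?_)
    have hsne : s ≠ ⊥ := (Finset.mem_erase.mp hs).1
    letI : Fintype (Quotient s) := Fintype.ofFinite _
    exact ih (Fintype.card (Quotient s)) (lt_of_lt_of_le (card_quot_lt hsne) hcard)
      (Quotient s) (quotG G s) le_rfl
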